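/- For p, q > 1, the generalized hyperbolic sine sinh_{p,q}, defined as the inverse of arcsinh_{p,q}(x) = ∫_0^x (1+t^q)^(-1/p) dt on [0,∞), is geometrically convex on its domain (0, m*_{p,q}): for all r, s in the domain and λ ∈ [0,1], sinh_{p,q}(r^λ s^(1-λ)) ≤ sinh_{p,q}(r)^λ · sinh_{p,q}(s)^(1-λ), where m*_{p,q} = ∫_0^∞ (1+t^q)^(-1/p) dt (possibly +∞). -/

import Mathlib

open Real Set intervalIntegral

namespace SinhPQAux

noncomputable def h (p q t : ℝ) : ℝ := (1 + t ^ q) ^ (-1/p)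
noncomputable def F (p q x : ℝ) : ℝ := ∫ t in (0:ℝ)..x, h p q t
noncomputable def w (p q t : ℝ) : ℝ := 1 - q / p * (t ^ q / (1 + t ^ q))

variable {p q : ℝ}

lemma base_pos (hq : 0 < q) {t : ℝ} (ht : 0 ≤ t) : 0 < 1 + t ^ q :=
  add_pos_of_pos_of_nonneg one_pos (Real.rpow_nonneg ht q)

lemma h_pos (hq : 0 < q) {t : ℝ} (ht : 0 ≤ t) : 0 < h p q t :=
  Real.rpow_pos_of_pos (base_pos hq ht) _

lemma base_contOn (hq : 0 < q) : ContinuousOn (fun t : ℝ => 1 + t ^ q) (Ici 0) :=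
  (continuous_const.add (Real.continuous_rpow_const hq.le)).continuousOn

lemma h_contOn (hq : 0 < q) : ContinuousOn (h p q) (Ici 0) :=
  (base_contOn hq).rpow_const fun t ht => Or.inl (base_pos hq ht).ne'

lemma hw_contOn (hq : 0 < q) : ContinuousOn (fun t => h p q t * w p q t) (Ici 0) := by
  refine (h_contOn hq).mul ?_
  refine continuousOn_const.sub (continuousOn_const.mul ?_)
  exact ((Real.continuous_rpow_const hq.le).continuousOn).div (base_contOn hq)
    fun t ht => (base_pos hq ht).ne'

lemma uIcc_subset_Ici {x y : ℝ} (hx : 0 ≤ x) (hy : 0 ≤ y) : uIcc x y ⊆ Ici 0 :=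
  fun t ht => le_trans (le_min hx hy) ht.1

lemma h_intInt (hq : 0 < q) {x y : ℝ} (hx : 0 ≤ x) (hy : 0 ≤ y) :
    IntervalIntegrable (h p q) MeasureTheory.volume x y :=
  ((h_contOn hq).mono (uIcc_subset_Ici hx hy)).intervalIntegrable

lemma hw_intInt (hq : 0 < q) {x y : ℝ} (hx : 0 ≤ x) (hy : 0 ≤ y) :
    IntervalIntegrable (fun t => h p q t * w p q t) MeasureTheory.volume x y :=
  ((hw_contOn hq).mono (uIcc_subset_Ici hx hy)).intervalIntegrable

lemma F_pos (hq : 0 < q) {x : ℝ} (hx : 0 < x) : 0 < F p q x :=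
  intervalIntegral_pos_of_pos_on (h_intInt hq le_rfl hx.le)
    (fun t ht => h_pos hq ht.1.le) hx

lemma F_add (hq : 0 < q) {x y : ℝ} (hx : 0 ≤ x) (hy : 0 ≤ y) :
    F p q x + ∫ t in x..y, h p q t = F p q y :=
  integral_add_adjacent_intervals (h_intInt hq le_rfl hx) (h_intInt hq hx hy)

lemma F_lt (hq : 0 < q) {x y : ℝ} (hx : 0 ≤ x) (hxy : x < y) : F p q x < F p q y := by
  rw [← F_add hq hx (hx.trans hxy.le)]
  have : 0 < ∫ t in x..y, h p q t :=
    intervalIntegral_pos_of_pos_on (h_intInt hq hx (hx.trans hxy.le))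
      (fun t ht => h_pos hq (hx.trans ht.1.le)) hxy
  linarith

lemma F_le (hq : 0 < q) {x y : ℝ} (hx : 0 ≤ x) (hxy : x ≤ y) : F p q x ≤ F p q y := by
  rcases eq_or_lt_of_le hxy with rfl | hlt
  · exact le_rfl
  · exact (F_lt hq hx hlt).le

lemma h_contAt (hq : 0 < q) {x : ℝ} (hx : 0 ≤ x) : ContinuousAt (h p q) x := by
  have h1 : ContinuousAt (fun t : ℝ => 1 + t ^ q) x :=
    (continuous_const.add (Real.continuous_rpow_const hq.le)).continuousAt
  exact h1.rpow_const (Or.inl (base_pos hq hx).ne')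

lemma hasDerivAt_F (hq : 0 < q) {x : ℝ} (hx : 0 < x) :
    HasDerivAt (F p q) (h p q x) x :=
  integral_hasDerivAt_right (h_intInt hq le_rfl hx.le)
    ⟨Ioi 0, Ioi_mem_nhds hx,
      ((h_contOn hq).mono Ioi_subset_Ici_self).aestronglyMeasurable measurableSet_Ioi⟩
    (h_contAt hq hx.le)

lemma eta_deriv (hp : 0 < p) (hq : 1 < q) {t : ℝ} (ht : 0 ≤ t) :
    HasDerivAt (fun s => s * h p q s) (h p q t * w p q t) t := by
  have hbase : 0 < 1 + t ^ q := base_pos (by linarith) ht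
  have hinner : HasDerivAt (fun s : ℝ => 1 + s ^ q) (q * t ^ (q - 1)) t :=
    (Real.hasDerivAt_rpow_const (Or.inr hq.le)).const_add 1
  have houter : HasDerivAt (h p q) (q * t ^ (q - 1) * (-1/p) * (1 + t ^ q) ^ (-1/p - 1)) t :=
    hinner.rpow_const (Or.inl hbase.ne')
  have hmul : HasDerivAt (fun s => s * h p q s) _ t := (hasDerivAt_id t).mul houter
  convert hmul using 1
  rcases eq_or_lt_of_le ht with rfl | htpos
  · have h0q : (0:ℝ) ^ q = 0 := Real.zero_rpow (by positivity)
    simp [h, w, h0q]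
  · have htq : t * t ^ (q - 1) = t ^ q := by
      have h1 := (Real.rpow_add htpos 1 (q - 1)).symm
      rw [Real.rpow_one] at h1
      rw [show (1:ℝ) + (q - 1) = q from by ring] at h1
      exact h1
    have hsplit : (1 + t ^ q) ^ (-1/p - 1) = (1 + t ^ q) ^ (-1/p) / (1 + t ^ q) := by
      rw [Real.rpow_sub hbase, Real.rpow_one]
    rw [hsplit]
    simp only [h, w, id_eq, one_mul]
    have hre : t * (q * t ^ (q - 1) * (-1/p) * ((1 + t ^ q) ^ (-1/p) / (1 + t ^ q)))
        = (t * t ^ (q - 1)) * (q * (-1/p) * ((1 + t ^ q) ^ (-1/p) / (1 + t ^ q))) := by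
      ring
    rw [hre, htq]
    field_simp
    ring

lemma eta_int (hp : 0 < p) (hq : 1 < q) {x y : ℝ} (hx : 0 ≤ x) (hy : 0 ≤ y) :
    ∫ t in x..y, h p q t * w p q t = y * h p q y - x * h p q x :=
  integral_eq_sub_of_hasDerivAt
    (fun t ht => eta_deriv hp hq (le_trans (le_min hx hy) ht.1))
    (hw_intInt (by linarith) hx hy)

lemma w_anti (hp : 0 < p) (hq : 1 < q) {s t : ℝ} (hs : 0 ≤ s) (hst : s ≤ t) :
    w p q t ≤ w p q s := by
  have hq0 : (0:ℝ) < q := by linarith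
  have hsp : 0 < 1 + s ^ q := base_pos hq0 hs
  have htp : 0 < 1 + t ^ q := base_pos hq0 (hs.trans hst)
  have hle : s ^ q ≤ t ^ q := Real.rpow_le_rpow hs hst hq0.le
  have hs0 : 0 ≤ s ^ q := Real.rpow_nonneg hs q
  have hdiv : s ^ q / (1 + s ^ q) ≤ t ^ q / (1 + t ^ q) := by
    rw [div_le_div_iff₀ hsp htp]
    nlinarith
  have hqp : 0 ≤ q / p := by positivity
  unfold w
  nlinarith [mul_le_mul_of_nonneg_left hdiv hqp]

lemma phi_anti (hp : 0 < p) (hq : 1 < q) {x y : ℝ} (hx : 0 < x) (hxy : x ≤ y) :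
    y * h p q y * F p q x ≤ x * h p q x * F p q y := by
  have hq0 : (0:ℝ) < q := by linarith
  have hy0 : 0 < y := lt_of_lt_of_le hx hxy
  set I := ∫ t in x..y, h p q t with hI
  set J := ∫ t in x..y, h p q t * w p q t with hJ
  have hFy : F p q y = F p q x + I := (F_add hq0 hx.le hy0.le).symm
  have hEta : y * h p q y = x * h p q x + J := by
    have := eta_int hp hq hx.le hy0.le
    rw [hJ, this]; ring
  have hInonneg : 0 ≤ I :=
    integral_nonneg hxy fun t ht => (h_pos hq0 (hx.le.trans ht.1)).le
  have hJle : J ≤ w p q x * I := by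
    have : J ≤ ∫ t in x..y, w p q x * h p q t := by
      refine integral_mono_on hxy (hw_intInt hq0 hx.le hy0.le)
        ((h_intInt hq0 hx.le hy0.le).const_mul _) fun t ht => ?_
      rw [mul_comm (w p q x)]
      exact mul_le_mul_of_nonneg_left (w_anti hp hq hx.le ht.1)
        (h_pos hq0 (hx.le.trans ht.1)).le
    rwa [intervalIntegral.integral_const_mul] at this
  have hclaim2 : F p q x * w p q x ≤ x * h p q x := by
    have h1 : x * h p q x = ∫ t in (0:ℝ)..x, h p q t * w p q t := by
      rw [eta_int hp hq le_rfl hx.le]; simp [h]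
    have h2 : (∫ t in (0:ℝ)..x, w p q x * h p q t) ≤ ∫ t in (0:ℝ)..x, h p q t * w p q t := by
      refine integral_mono_on hx.le ((h_intInt hq0 le_rfl hx.le).const_mul _)
        (hw_intInt hq0 le_rfl hx.le) fun t ht => ?_
      rw [mul_comm (w p q x)]
      exact mul_le_mul_of_nonneg_left (w_anti hp hq ht.1 ht.2) (h_pos hq0 ht.1).le
    rw [intervalIntegral.integral_const_mul] at h2
    rw [h1]
    calc F p q x * w p q x = w p q x * F p q x := by ring
    _ ≤ _ := h2
  have hFx : 0 < F p q x := F_pos hq0 hx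
  calc y * h p q y * F p q x = (x * h p q x + J) * F p q x := by rw [hEta]
    _ ≤ (x * h p q x + w p q x * I) * F p q x := by nlinarith
    _ = x * h p q x * F p q x + (F p q x * w p q x) * I := by ring
    _ ≤ x * h p q x * F p q x + (x * h p q x) * I :=
        add_le_add le_rfl (mul_le_mul_of_nonneg_right hclaim2 hInonneg)
    _ = x * h p q x * F p q y := by rw [hFy]; ring

lemma hasDerivAt_L (hp : 0 < p) (hq : 0 < q) (u : ℝ) :
    HasDerivAt (fun u => Real.log (F p q (Real.exp u)))
      (Real.exp u * h p q (Real.exp u) / F p q (Real.exp u)) u := by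
  have hFe : HasDerivAt (fun u => F p q (Real.exp u))
      (h p q (Real.exp u) * Real.exp u) u :=
    (hasDerivAt_F hq (exp_pos u)).comp u (Real.hasDerivAt_exp u)
  have := hFe.log (F_pos hq (exp_pos u)).ne'
  convert this using 1
  ring

lemma L_concave (hp : 0 < p) (hq : 1 < q) :
    ConcaveOn ℝ univ (fun u => Real.log (F p q (Real.exp u))) := by
  have hq0 : (0:ℝ) < q := by linarith
  have hderiv : ∀ u, deriv (fun u => Real.log (F p q (Real.exp u))) u
      = Real.exp u * h p q (Real.exp u) / F p q (Real.exp u) :=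
    fun u => (hasDerivAt_L hp hq0 u).deriv
  refine AntitoneOn.concaveOn_of_deriv convex_univ ?_ ?_ ?_
  · exact (continuous_iff_continuousAt.mpr fun u =>
      (hasDerivAt_L hp hq0 u).continuousAt).continuousOn
  · intro u _
    exact (hasDerivAt_L hp hq0 u).differentiableAt.differentiableWithinAt
  · intro u _ v _ huv
    rw [hderiv, hderiv]
    rw [div_le_div_iff₀ (F_pos hq0 (exp_pos v)) (F_pos hq0 (exp_pos u))]
    exact phi_anti hp hq (exp_pos u) (exp_le_exp.mpr huv)

lemma F_core (hp : 0 < p) (hq : 1 < q) {a b l : ℝ} (ha : 0 < a) (hb : 0 < b)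
    (hl : l ∈ Icc (0:ℝ) 1) :
    F p q a ^ l * F p q b ^ (1 - l) ≤ F p q (a ^ l * b ^ (1 - l)) := by
  have hq0 : (0:ℝ) < q := by linarith
  have hcc := L_concave hp hq
  have key := hcc.2 (mem_univ (Real.log a)) (mem_univ (Real.log b)) hl.1
    (by linarith [hl.2] : (0:ℝ) ≤ 1 - l) (by ring)
  simp only [smul_eq_mul] at key
  rw [Real.exp_log ha, Real.exp_log hb] at key
  have hexp : Real.exp (l * Real.log a + (1 - l) * Real.log b) = a ^ l * b ^ (1 - l) := by
    rw [Real.exp_add, Real.rpow_def_of_pos ha, Real.rpow_def_of_pos hb, mul_comm l,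
      mul_comm (1 - l)]
  rw [hexp] at key
  have hFa : 0 < F p q a := F_pos hq0 ha
  have hFb : 0 < F p q b := F_pos hq0 hb
  have hG : 0 < a ^ l * b ^ (1 - l) :=
    mul_pos (Real.rpow_pos_of_pos ha l) (Real.rpow_pos_of_pos hb (1 - l))
  have := Real.exp_le_exp.mpr key
  rw [Real.exp_log (F_pos hq0 hG)] at this
  have hL : F p q a ^ l * F p q b ^ (1 - l)
      = Real.exp (l * Real.log (F p q a) + (1 - l) * Real.log (F p q b)) := by
    rw [Real.exp_add, Real.rpow_def_of_pos hFa, Real.rpow_def_of_pos hFb, mul_comm l,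
      mul_comm (1 - l)]
  rw [hL]
  exact this

lemma main_aux (hp : 1 < p) (hq : 1 < q) (S : ℝ → ℝ)
    (hS : ∀ x ∈ Set.Ici (0:ℝ), S (F p q x) = x)
    {a b l : ℝ} (ha : 0 < a) (hab : a ≤ b) (hl : l ∈ Icc (0:ℝ) 1) :
    S (F p q a ^ l * F p q b ^ (1 - l)) ≤ a ^ l * b ^ (1 - l) := by
  have hp0 : (0:ℝ) < p := by linarith
  have hq0 : (0:ℝ) < q := by linarith
  have hb : 0 < b := lt_of_lt_of_le ha hab
  have hFa : 0 < F p q a := F_pos hq0 ha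
  have hFb : 0 < F p q b := F_pos hq0 hb
  have hFab : F p q a ≤ F p q b := F_le hq0 ha.le hab
  set Gm := F p q a ^ l * F p q b ^ (1 - l) with hGm
  have hlow : F p q a ≤ Gm := by
    have h1 : F p q a ^ l * F p q a ^ (1 - l) = F p q a := by
      rw [← Real.rpow_add hFa]; norm_num
    calc F p q a = F p q a ^ l * F p q a ^ (1 - l) := h1.symm
      _ ≤ Gm := mul_le_mul_of_nonneg_left
          (Real.rpow_le_rpow hFa.le hFab (by linarith [hl.2] : (0:ℝ) ≤ 1 - l))
          (Real.rpow_nonneg hFa.le l)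
  have hhigh : Gm ≤ F p q b := by
    have h1 : F p q b ^ l * F p q b ^ (1 - l) = F p q b := by
      rw [← Real.rpow_add hFb]; norm_num
    calc Gm ≤ F p q b ^ l * F p q b ^ (1 - l) := mul_le_mul_of_nonneg_right
          (Real.rpow_le_rpow hFa.le hFab hl.1) (Real.rpow_nonneg hFb.le _)
      _ = F p q b := h1
  have hFcont : ContinuousOn (F p q) (Icc a b) := fun x hx =>
    ((hasDerivAt_F hq0 (lt_of_lt_of_le ha hx.1)).continuousAt).continuousWithinAt
  obtain ⟨c, hc, hFc⟩ := intermediate_value_Icc hab hFcont ⟨hlow, hhigh⟩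
  have hc0 : 0 < c := lt_of_lt_of_le ha hc.1
  have hSGm : S Gm = c := by rw [← hFc]; exact hS c hc0.le
  have hcore : Gm ≤ F p q (a ^ l * b ^ (1 - l)) := F_core hp0 hq ha hb hl
  have hG : 0 < a ^ l * b ^ (1 - l) :=
    mul_pos (Real.rpow_pos_of_pos ha l) (Real.rpow_pos_of_pos hb _)
  rw [hSGm]
  by_contra hcon
  push_neg at hcon
  have hlt := F_lt (p := p) hq0 hG.le hcon
  rw [hFc] at hlt
  linarith

end SinhPQAux

theorem sinh_pq_geom_convex (p q : ℝ) (hp : 1 < p) (hq : 1 < q) (S : ℝ → ℝ)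
    (hS : ∀ x ∈ Set.Ici (0:ℝ),
      S (∫ t in (0:ℝ)..x, (1 + t ^ q) ^ (-1/p)) = x) :
    ∀ r ∈ (fun x => ∫ t in (0:ℝ)..x, (1 + t ^ q) ^ (-1/p)) '' Set.Ioi (0:ℝ),
      ∀ s ∈ (fun x => ∫ t in (0:ℝ)..x, (1 + t ^ q) ^ (-1/p)) '' Set.Ioi (0:ℝ),
        ∀ l ∈ Set.Icc (0:ℝ) 1,
          S (r ^ l * s ^ (1 - l)) ≤ S r ^ l * S s ^ (1 - l) := by
  rintro r ⟨a, ha, rfl⟩ s ⟨b, hb, rfl⟩ l hl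
  have hS' : ∀ x ∈ Set.Ici (0:ℝ), S (SinhPQAux.F p q x) = x := hS
  have ha' : (0:ℝ) < a := ha
  have hb' : (0:ℝ) < b := hb
  show S (SinhPQAux.F p q a ^ l * SinhPQAux.F p q b ^ (1 - l))
      ≤ S (SinhPQAux.F p q a) ^ l * S (SinhPQAux.F p q b) ^ (1 - l)
  rw [hS' a ha'.le, hS' b hb'.le]
  rcases le_total a b with hab | hba
  · exact SinhPQAux.main_aux hp hq S hS' ha' hab hl
  · have key := SinhPQAux.main_aux hp hq S hS' hb' hba
      (l := 1 - l) ⟨by linarith [hl.2], by linarith [hl.1]⟩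
    rw [sub_sub_cancel] at key
    rw [mul_comm (SinhPQAux.F p q a ^ l), mul_comm (a ^ l)]
    exact key
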